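/- arXiv:1212.5804 — 3 statements merged into one kernel-verified Lean document; each statement's English description precedes it below -/
import Mathlib

section
/- Let H be a real Hilbert space, let ω > η > 0, and let F : H → H satisfy F(0) = 0 and the quasi-dissipativity condition ⟨F(x) − F(y), x − y⟩ ≤ η‖x − y‖² for all x, y ∈ H. Let φ : [0,∞) → H be differentiable and a : [0,∞) → H be such that φ′(t) = a(t) + F(φ(t)) and ⟨a(t), φ(t)⟩ ≤ −ω‖φ(t)‖² for all t ≥ 0. Then ‖φ(t)‖² ≤ e^{−2(ω−η)t}‖φ(0)‖² for all t ≥ 0. -/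
open scoped InnerProductSpace

theorem deterministic_decay_estimate
    {H : Type*} [NormedAddCommGroup H] [InnerProductSpace ℝ H]
    (ω η : ℝ) (hη : 0 < η) (hωη : η < ω)
    (F : H → H) (hF0 : F 0 = 0)
    (hF : ∀ x y : H, ⟪F x - F y, x - y⟫_ℝ ≤ η * ‖x - y‖ ^ 2)
    (φ a : ℝ → H)
    (hφ : ∀ t ≥ (0:ℝ), HasDerivAt φ (a t + F (φ t)) t)
    (ha : ∀ t ≥ (0:ℝ), ⟪a t, φ t⟫_ℝ ≤ -ω * ‖φ t‖ ^ 2) :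
    ∀ t ≥ (0:ℝ), ‖φ t‖ ^ 2 ≤ Real.exp (-2 * (ω - η) * t) * ‖φ 0‖ ^ 2 := by
  intro t ht
  set c : ℝ := 2 * (ω - η) with hc
  have hcpos : 0 < c := by rw [hc]; linarith
  set g : ℝ → ℝ := fun s => Real.exp (c * s) * ⟪φ s, φ s⟫_ℝ with hg
  -- derivative of g at s ≥ 0
  have hgderiv : ∀ s ≥ (0:ℝ), HasDerivAt g
      (Real.exp (c * s) * c * ⟪φ s, φ s⟫_ℝ +
        Real.exp (c * s) * (⟪φ s, a s + F (φ s)⟫_ℝ + ⟪a s + F (φ s), φ s⟫_ℝ)) s := by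
    intro s hs
    have hexp : HasDerivAt (fun s : ℝ => Real.exp (c * s)) (Real.exp (c * s) * c) s := by
      simpa using ((hasDerivAt_id s).const_mul c).exp
    have hinner : HasDerivAt (fun s => ⟪φ s, φ s⟫_ℝ)
        (⟪φ s, a s + F (φ s)⟫_ℝ + ⟪a s + F (φ s), φ s⟫_ℝ) s :=
      (hφ s hs).inner ℝ (hφ s hs)
    have h := hexp.mul hinner
    rw [hg]
    exact h
  have hbound : ∀ s ≥ (0:ℝ),
      Real.exp (c * s) * c * ⟪φ s, φ s⟫_ℝ +
        Real.exp (c * s) * (⟪φ s, a s + F (φ s)⟫_ℝ + ⟪a s + F (φ s), φ s⟫_ℝ) ≤ 0 := by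
    intro s hs
    have hFs : ⟪F (φ s), φ s⟫_ℝ ≤ η * ‖φ s‖ ^ 2 := by
      have := hF (φ s) 0
      simpa [hF0, sub_zero] using this
    have has := ha s hs
    have hsum : ⟪φ s, a s + F (φ s)⟫_ℝ + ⟪a s + F (φ s), φ s⟫_ℝ
        ≤ -c * ‖φ s‖ ^ 2 := by
      rw [real_inner_comm (φ s)]
      have : ⟪a s + F (φ s), φ s⟫_ℝ ≤ (-ω + η) * ‖φ s‖ ^ 2 := by
        rw [inner_add_left]
        nlinarith
      rw [real_inner_comm] at this
      simp only [hc] at this ⊢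
      nlinarith
    have hself : ⟪φ s, φ s⟫_ℝ = ‖φ s‖ ^ 2 := real_inner_self_eq_norm_sq (φ s)
    have hexppos : 0 < Real.exp (c * s) := Real.exp_pos _
    rw [hself]
    nlinarith [sq_nonneg ‖φ s‖]
  -- g is antitone on [0, ∞)
  have hanti : AntitoneOn g (Set.Ici (0:ℝ)) := by
    apply antitoneOn_of_deriv_nonpos (convex_Ici 0)
    · intro s hs
      exact ((hgderiv s hs).continuousAt).continuousWithinAt
    · intro s hs
      rw [interior_Ici] at hs
      exact (hgderiv s (le_of_lt hs)).differentiableAt.differentiableWithinAt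
    · intro s hs
      rw [interior_Ici] at hs
      rw [(hgderiv s (le_of_lt hs)).deriv]
      exact hbound s (le_of_lt hs)
  have hle : g t ≤ g 0 := hanti (Set.self_mem_Ici) ht ht
  have hself : ∀ s, ⟪φ s, φ s⟫_ℝ = ‖φ s‖ ^ 2 := fun s => real_inner_self_eq_norm_sq (φ s)
  simp only [hg, hself, mul_zero, Real.exp_zero, one_mul] at hle
  have hexppos : 0 < Real.exp (c * t) := Real.exp_pos _
  have : Real.exp (-2 * (ω - η) * t) = (Real.exp (c * t))⁻¹ := by
    rw [← Real.exp_neg, hc]; ring_nf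
  rw [this, ← mul_le_mul_iff_right₀ hexppos]
  calc Real.exp (c * t) * ‖φ t‖ ^ 2 ≤ ‖φ 0‖ ^ 2 := hle
    _ = Real.exp (c * t) * ((Real.exp (c * t))⁻¹ * ‖φ 0‖ ^ 2) := by
        field_simp
end

section
/- Let H be a real Hilbert space, ω > γ̄ ≥ 0, T > 0, and let u : [0,T] → H be differentiable, with continuous maps a, b, Φ : [0,T] → H such that u′(t) = a(t) + b(t) + Φ(t), ⟨a(t), u(t)⟩ ≤ −ω‖u(t)‖², and ‖b(t)‖ ≤ γ̄‖u(t)‖ for all t ∈ [0,T]. Then for every integer a ≥ 1 and every δ ∈ (0, ω − γ̄) there exists a constant C > 0 (depending only on a, δ, ω, γ̄) such that for all t ∈ [0,T]: ‖u(t)‖^{2a} ≤ e^{−2a(ω−γ̄−δ)t}‖u(0)‖^{2a} + C ∫₀ᵗ e^{−2a(ω−γ̄−δ)(t−s)} ‖Φ(s)‖^{2a} ds; in particular sup_{t∈[0,T]} ‖u(t)‖^{2a} ≤ ‖u(0)‖^{2a} + (C/(2a(ω−γ̄−δ))) sup_{s∈[0,T]} ‖Φ(s)‖^{2a}. -/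
open scoped InnerProductSpace

open MeasureTheory intervalIntegral Set

set_option maxHeartbeats 1000000 in
theorem higher_order_term_differential_inequality
    {H : Type*} [NormedAddCommGroup H] [InnerProductSpace ℝ H]
    (ω γ : ℝ) (hγ : 0 ≤ γ) (hωγ : γ < ω)
    (T : ℝ) (hT : 0 < T)
    (u adrift b Φ : ℝ → H)
    (hac : ContinuousOn adrift (Set.Icc (0:ℝ) T))
    (hbc : ContinuousOn b (Set.Icc (0:ℝ) T))
    (hΦc : ContinuousOn Φ (Set.Icc (0:ℝ) T))
    (hderiv : ∀ t ∈ Set.Icc (0:ℝ) T, HasDerivAt u (adrift t + b t + Φ t) t)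
    (ha : ∀ t ∈ Set.Icc (0:ℝ) T, ⟪adrift t, u t⟫_ℝ ≤ -ω * ‖u t‖ ^ 2)
    (hb : ∀ t ∈ Set.Icc (0:ℝ) T, ‖b t‖ ≤ γ * ‖u t‖) :
    ∀ a : ℕ, 1 ≤ a → ∀ δ ∈ Set.Ioo (0:ℝ) (ω - γ), ∃ C > (0:ℝ),
      (∀ t ∈ Set.Icc (0:ℝ) T,
        ‖u t‖ ^ (2 * a) ≤
          Real.exp (-(2 * (a:ℝ)) * (ω - γ - δ) * t) * ‖u 0‖ ^ (2 * a)
          + C * ∫ s in (0:ℝ)..t,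
              Real.exp (-(2 * (a:ℝ)) * (ω - γ - δ) * (t - s)) * ‖Φ s‖ ^ (2 * a)) ∧
      (⨆ t ∈ Set.Icc (0:ℝ) T, ‖u t‖ ^ (2 * a)) ≤
        ‖u 0‖ ^ (2 * a)
          + (C / (2 * (a:ℝ) * (ω - γ - δ))) * ⨆ s ∈ Set.Icc (0:ℝ) T, ‖Φ s‖ ^ (2 * a) := by
  intro a haN δ hδ
  obtain ⟨hδ0, hδω⟩ := hδ
  have ha1 : (1:ℝ) ≤ (a:ℝ) := by exact_mod_cast haN
  have haR : (0:ℝ) < (a:ℝ) := lt_of_lt_of_le one_pos ha1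
  have hωγδ : 0 < ω - γ - δ := by linarith
  set lam : ℝ := 2 * (a:ℝ) * (ω - γ - δ) with hlam_def
  have hlam0 : 0 < lam := by rw [hlam_def]; positivity
  have hδpow : (0:ℝ) < δ ^ (2*a - 1) := pow_pos hδ0 _
  set C : ℝ := 2 * (a:ℝ) / δ ^ (2*a - 1) with hC_def
  have hC0 : 0 < C := by rw [hC_def]; positivity
  have h0Icc : (0:ℝ) ∈ Set.Icc (0:ℝ) T := ⟨le_rfl, hT.le⟩
  have hu_cont : ContinuousOn u (Set.Icc 0 T) :=
    fun t ht => ((hderiv t ht).continuousAt).continuousWithinAt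
  set g : ℝ → ℝ := fun t => ‖u t‖ ^ (2*a) with hg_def
  have hg_cont : ContinuousOn g (Set.Icc 0 T) := (hu_cont.norm.pow _)
  have hg_nonneg : ∀ t, 0 ≤ g t := fun t => pow_nonneg (norm_nonneg _) _
  -- derivative of g with the key differential inequality
  have hg_deriv : ∀ t ∈ Set.Icc (0:ℝ) T,
      ∃ d, HasDerivAt g d t ∧ d ≤ -lam * g t + C * ‖Φ t‖^(2*a) := by
    intro t ht
    have hu := hderiv t ht
    have h1 : HasDerivAt (fun s => ⟪u s, u s⟫_ℝ)
        (⟪u t, adrift t + b t + Φ t⟫_ℝ + ⟪adrift t + b t + Φ t, u t⟫_ℝ) t :=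
      HasDerivAt.inner ℝ hu hu
    have h2 : (fun s => ⟪u s, u s⟫_ℝ) = fun s => ‖u s‖^2 :=
      funext fun s => real_inner_self_eq_norm_sq _
    rw [h2] at h1
    have hq : HasDerivAt (fun s => ‖u s‖^2) (2 * ⟪adrift t + b t + Φ t, u t⟫_ℝ) t := by
      convert h1 using 1
      rw [real_inner_comm (u t)]; ring
    have hgfun : g = fun s => (‖u s‖^2)^a := funext fun s => pow_mul _ 2 a
    have hgd : HasDerivAt g
        ((a:ℝ) * (‖u t‖^2)^(a-1) * (2 * ⟪adrift t + b t + Φ t, u t⟫_ℝ)) t := by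
      rw [hgfun]
      exact hq.pow a
    refine ⟨_, hgd, ?_⟩
    set X := ‖u t‖ with hX
    set Y := ‖Φ t‖ with hY
    have hX0 : (0:ℝ) ≤ X := norm_nonneg _
    have hY0 : (0:ℝ) ≤ Y := norm_nonneg _
    have hinner : ⟪adrift t + b t + Φ t, u t⟫_ℝ ≤ -(ω - γ) * X^2 + Y * X := by
      have h1 := ha t ht
      have h2 : ⟪b t, u t⟫_ℝ ≤ γ * X^2 := by
        have := real_inner_le_norm (b t) (u t)
        nlinarith [hb t ht, norm_nonneg (u t)]
      have h3 : ⟪Φ t, u t⟫_ℝ ≤ Y * X := real_inner_le_norm _ _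
      rw [inner_add_left, inner_add_left]
      nlinarith
    have hnn : (0:ℝ) ≤ (a:ℝ) * (X^2)^(a-1) := by positivity
    have step1 : (a:ℝ) * (X^2)^(a-1) * (2 * ⟪adrift t + b t + Φ t, u t⟫_ℝ)
        ≤ (a:ℝ) * (X^2)^(a-1) * (2 * (-(ω - γ) * X^2 + Y * X)) := by
      apply mul_le_mul_of_nonneg_left _ hnn
      linarith
    have e1 : (X^2)^(a-1) * X^2 = X^(2*a) := by
      rw [← pow_mul, ← pow_add]; congr 1; omega
    have e2 : (X^2)^(a-1) * X = X^(2*a-1) := by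
      rw [← pow_mul, ← pow_succ]; congr 1; omega
    have eq1 : (a:ℝ) * (X^2)^(a-1) * (2 * (-(ω - γ) * X^2 + Y * X))
        = -(2*(a:ℝ)*(ω - γ)) * X^(2*a) + 2*(a:ℝ) * (X^(2*a-1) * Y) := by
      rw [← e1, ← e2]; ring
    have young : 2*(a:ℝ) * (X^(2*a-1) * Y) ≤ 2*(a:ℝ)*δ * X^(2*a) + C * Y^(2*a) := by
      have eX : X^(2*a-1) * X = X^(2*a) := by rw [← pow_succ]; congr 1; omega
      have eY : Y^(2*a-1) * Y = Y^(2*a) := by rw [← pow_succ]; congr 1; omega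
      rcases le_or_gt Y (δ * X) with h | h
      · have h4 : X^(2*a-1) * Y ≤ δ * X^(2*a) := by
          calc X^(2*a-1) * Y ≤ X^(2*a-1) * (δ * X) :=
                mul_le_mul_of_nonneg_left h (pow_nonneg hX0 _)
            _ = δ * X^(2*a) := by rw [← eX]; ring
        nlinarith [pow_nonneg hY0 (2*a)]
      · have hXle : X ≤ Y / δ := by
          rw [le_div_iff₀ hδ0]; nlinarith
        have h5 : X^(2*a-1) ≤ (Y/δ)^(2*a-1) := pow_le_pow_left₀ hX0 hXle _
        have h6 : 2*(a:ℝ) * (X^(2*a-1) * Y) ≤ 2*(a:ℝ) * ((Y/δ)^(2*a-1) * Y) := by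
          apply mul_le_mul_of_nonneg_left _ (by positivity)
          exact mul_le_mul_of_nonneg_right h5 hY0
        have h7 : 2*(a:ℝ) * ((Y/δ)^(2*a-1) * Y) = C * Y^(2*a) := by
          rw [hC_def, div_pow, ← eY]
          ring
        have h8 : (0:ℝ) ≤ 2*(a:ℝ)*δ * X^(2*a) := by positivity
        linarith
    have hgt : g t = X^(2*a) := rfl
    have hlam' : -(2*(a:ℝ)*(ω - γ)) * X^(2*a) + 2*(a:ℝ)*δ * X^(2*a) = -lam * X^(2*a) := by
      rw [hlam_def]; ring
    calc (a:ℝ) * (X^2)^(a-1) * (2 * ⟪adrift t + b t + Φ t, u t⟫_ℝ)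
        ≤ (a:ℝ) * (X^2)^(a-1) * (2 * (-(ω - γ) * X^2 + Y * X)) := step1
      _ = -(2*(a:ℝ)*(ω - γ)) * X^(2*a) + 2*(a:ℝ) * (X^(2*a-1) * Y) := eq1
      _ ≤ -(2*(a:ℝ)*(ω - γ)) * X^(2*a) + (2*(a:ℝ)*δ * X^(2*a) + C * Y^(2*a)) := by linarith
      _ = -lam * g t + C * Y^(2*a) := by rw [hgt]; rw [hlam_def]; ring
  -- the forcing function and its primitive
  set ψ : ℝ → ℝ := fun s => Real.exp (lam*s) * ‖Φ s‖^(2*a) with hψ_def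
  have hψc : ContinuousOn ψ (Set.Icc 0 T) :=
    ((Real.continuous_exp.comp (continuous_const.mul continuous_id)).continuousOn).mul
      (hΦc.norm.pow _)
  have hψ_nonneg : ∀ s, 0 ≤ ψ s :=
    fun s => mul_nonneg (Real.exp_pos _).le (pow_nonneg (norm_nonneg _) _)
  set F : ℝ → ℝ := fun t => ∫ s in (0:ℝ)..t, ψ s with hF_def
  have hψint : ∀ t ∈ Set.Icc (0:ℝ) T, IntervalIntegrable ψ volume 0 t := by
    intro t ht
    apply (hψc.mono ?_).intervalIntegrable
    rw [Set.uIcc_of_le ht.1]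
    exact Set.Icc_subset_Icc le_rfl ht.2
  have hFc : ContinuousOn F (Set.Icc 0 T) := by
    have hIO : IntegrableOn ψ (Set.uIcc (0:ℝ) T) volume := by
      rw [Set.uIcc_of_le hT.le]
      exact hψc.integrableOn_Icc
    have := intervalIntegral.continuousOn_primitive_interval (f := ψ) (μ := volume)
      (a := (0:ℝ)) (b := T) hIO
    rwa [Set.uIcc_of_le hT.le] at this
  have hF_deriv : ∀ t ∈ Set.Ioo (0:ℝ) T, HasDerivAt F (ψ t) t := by
    intro t ht
    have htIcc : t ∈ Set.Icc (0:ℝ) T := Set.Ioo_subset_Icc_self ht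
    have hnhds : Set.Icc (0:ℝ) T ∈ nhds t := Icc_mem_nhds ht.1 ht.2
    have hcat : ContinuousAt ψ t := hψc.continuousAt hnhds
    exact intervalIntegral.integral_hasDerivAt_right (hψint t htIcc)
      (AEStronglyMeasurable.stronglyMeasurableAtFilter_of_mem
        (hψc.aestronglyMeasurable measurableSet_Icc) hnhds) hcat
  -- the auxiliary function h and its monotonicity
  set h : ℝ → ℝ := fun t => Real.exp (lam*t) * g t - C * F t with hh_def
  have hexp_deriv : ∀ t : ℝ, HasDerivAt (fun s => Real.exp (lam*s)) (lam * Real.exp (lam*t)) t := by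
    intro t
    have : HasDerivAt (fun s : ℝ => lam * s) lam t := by
      simpa using (hasDerivAt_id t).const_mul lam
    have := this.exp
    convert this using 1
    ring
  have hh_deriv : ∀ t ∈ Set.Ioo (0:ℝ) T, ∃ d, d ≤ 0 ∧ HasDerivAt h d t := by
    intro t ht
    obtain ⟨d, hgd, hdle⟩ := hg_deriv t (Set.Ioo_subset_Icc_self ht)
    have hhd : HasDerivAt h
        ((lam * Real.exp (lam*t)) * g t + Real.exp (lam*t) * d - C * ψ t) t :=
      ((hexp_deriv t).mul hgd).sub ((hF_deriv t ht).const_mul C)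
    refine ⟨_, ?_, hhd⟩
    have hexp_pos : (0:ℝ) < Real.exp (lam*t) := Real.exp_pos _
    have hmul : Real.exp (lam*t) * d ≤ Real.exp (lam*t) * (-lam * g t + C * ‖Φ t‖^(2*a)) :=
      mul_le_mul_of_nonneg_left hdle hexp_pos.le
    have hexpand : Real.exp (lam*t) * (-lam * g t + C * ‖Φ t‖^(2*a))
        = -(lam * Real.exp (lam*t) * g t) + C * ψ t := by
      rw [hψ_def]; ring
    rw [hexpand] at hmul
    linarith
  have hanti : AntitoneOn h (Set.Icc 0 T) := by
    apply antitoneOn_of_deriv_nonpos (convex_Icc 0 T)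
    · exact ((Real.continuous_exp.comp (continuous_const.mul continuous_id)).continuousOn.mul
        hg_cont).sub (continuousOn_const.mul hFc)
    · intro t ht
      rw [interior_Icc] at ht
      obtain ⟨d, _, hd⟩ := hh_deriv t ht
      exact hd.differentiableAt.differentiableWithinAt
    · intro t ht
      rw [interior_Icc] at ht
      obtain ⟨d, hd0, hd⟩ := hh_deriv t ht
      rw [hd.deriv]; exact hd0
  -- main pointwise Gronwall estimate
  have main : ∀ t ∈ Set.Icc (0:ℝ) T,
      g t ≤ Real.exp (-(lam*t)) * g 0 + C * (Real.exp (-(lam*t)) * F t) := by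
    intro t ht
    have hmono := hanti h0Icc ht ht.1
    have hF0 : F 0 = 0 := intervalIntegral.integral_same
    have hh0 : h 0 = g 0 := by
      rw [hh_def]; simp [hF0]
    have hht : h t = Real.exp (lam*t) * g t - C * F t := rfl
    rw [hht, hh0] at hmono
    have hexp_pos : (0:ℝ) < Real.exp (lam*t) := Real.exp_pos _
    rw [Real.exp_neg]
    have hinv : (Real.exp (lam*t))⁻¹ * Real.exp (lam*t) = 1 := inv_mul_cancel₀ hexp_pos.ne'
    have h9 := mul_le_mul_of_nonneg_left hmono (inv_nonneg.2 hexp_pos.le)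
    have h10 : (Real.exp (lam*t))⁻¹ * (Real.exp (lam*t) * g t - C * F t)
        = g t - C * ((Real.exp (lam*t))⁻¹ * F t) := by
      rw [mul_sub, ← mul_assoc, hinv, one_mul]; ring
    rw [h10] at h9
    linarith
  -- rewriting the integral in the target form
  have hint_eq : ∀ t : ℝ,
      (∫ s in (0:ℝ)..t, Real.exp (-(2 * (a:ℝ)) * (ω - γ - δ) * (t - s)) * ‖Φ s‖ ^ (2 * a))
        = Real.exp (-(lam*t)) * F t := by
    intro t
    rw [hF_def, ← intervalIntegral.integral_const_mul]
    apply intervalIntegral.integral_congr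
    intro s _
    show Real.exp (-(2 * (a:ℝ)) * (ω - γ - δ) * (t - s)) * ‖Φ s‖ ^ (2 * a)
        = Real.exp (-(lam*t)) * (Real.exp (lam*s) * ‖Φ s‖^(2*a))
    have harg : -(2 * (a:ℝ)) * (ω - γ - δ) * (t - s) = -(lam*t) + lam*s := by
      rw [hlam_def]; ring
    rw [harg, Real.exp_add]
    ring
  refine ⟨C, hC0, ?_, ?_⟩
  · intro t ht
    have harg : -(2 * (a:ℝ)) * (ω - γ - δ) * t = -(lam*t) := by
      rw [hlam_def]; ring
    rw [harg, hint_eq t]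
    exact main t ht
  · -- sup estimate
    obtain ⟨x₀, hx₀, hx₀max⟩ := isCompact_Icc.exists_isMaxOn ⟨0, h0Icc⟩
      ((hΦc.norm.pow (2*a)) : ContinuousOn (fun s => ‖Φ s‖^(2*a)) (Set.Icc (0:ℝ) T))
    set M : ℝ := ⨆ s ∈ Set.Icc (0:ℝ) T, ‖Φ s‖^(2*a) with hM_def
    have hbdd : BddAbove (Set.range fun s => ⨆ _ : s ∈ Set.Icc (0:ℝ) T, ‖Φ s‖^(2*a)) := by
      refine ⟨‖Φ x₀‖^(2*a), ?_⟩
      rintro y ⟨s, rfl⟩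
      show (⨆ _ : s ∈ Set.Icc (0:ℝ) T, ‖Φ s‖^(2*a)) ≤ ‖Φ x₀‖^(2*a)
      by_cases hs : s ∈ Set.Icc (0:ℝ) T
      · rw [ciSup_pos hs]; exact hx₀max hs
      · haveI : IsEmpty (s ∈ Set.Icc (0:ℝ) T) := ⟨hs⟩
        rw [Real.iSup_of_isEmpty]
        positivity
    have hM_ub : ∀ s ∈ Set.Icc (0:ℝ) T, ‖Φ s‖^(2*a) ≤ M := by
      intro s hs
      have h0 := le_ciSup hbdd s
      rw [ciSup_pos hs] at h0
      exact h0
    have hM0 : 0 ≤ M := le_trans (by positivity) (hM_ub 0 h0Icc)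
    have hsup_each : ∀ t ∈ Set.Icc (0:ℝ) T, g t ≤ g 0 + C / lam * M := by
      intro t ht
      have h1 := main t ht
      have hI : (∫ s in (0:ℝ)..t, Real.exp (lam*s)) = lam⁻¹ * (Real.exp (lam*t) - 1) := by
        rw [integral_comp_mul_left Real.exp hlam0.ne']
        rw [integral_exp]
        simp [Real.exp_zero]
      have hcont2 : ContinuousOn (fun s => Real.exp (lam*s) * M) (Set.Icc (0:ℝ) T) :=
        ((Real.continuous_exp.comp (continuous_const.mul continuous_id)).continuousOn).mul
          continuousOn_const
      have hint2 : IntervalIntegrable (fun s => Real.exp (lam*s) * M) volume 0 t := by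
        apply (hcont2.mono ?_).intervalIntegrable
        rw [Set.uIcc_of_le ht.1]
        exact Set.Icc_subset_Icc le_rfl ht.2
      have hFt : F t ≤ M * (lam⁻¹ * (Real.exp (lam*t) - 1)) := by
        calc F t ≤ ∫ s in (0:ℝ)..t, Real.exp (lam*s) * M := by
              apply intervalIntegral.integral_mono_on ht.1 (hψint t ht) hint2
              intro s hs
              exact mul_le_mul_of_nonneg_left
                (hM_ub s ⟨hs.1, hs.2.trans ht.2⟩) (Real.exp_pos _).le
          _ = (∫ s in (0:ℝ)..t, Real.exp (lam*s)) * M := by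
              rw [← intervalIntegral.integral_mul_const]
          _ = M * (lam⁻¹ * (Real.exp (lam*t) - 1)) := by rw [hI]; ring
      have hE := Real.exp_pos (lam*t)
      have hEneg : Real.exp (-(lam*t)) = (Real.exp (lam*t))⁻¹ := Real.exp_neg _
      have h2 : Real.exp (-(lam*t)) * F t ≤ M / lam := by
        calc Real.exp (-(lam*t)) * F t
            ≤ Real.exp (-(lam*t)) * (M * (lam⁻¹ * (Real.exp (lam*t) - 1))) :=
              mul_le_mul_of_nonneg_left hFt (Real.exp_pos _).le
          _ = M / lam * (1 - Real.exp (-(lam*t))) := by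
              rw [hEneg]
              have hx : (Real.exp (lam*t))⁻¹ * Real.exp (lam*t) = 1 :=
                inv_mul_cancel₀ hE.ne'
              linear_combination M * lam⁻¹ * hx
          _ ≤ M / lam := by
              nlinarith [Real.exp_pos (-(lam*t)), div_nonneg hM0 hlam0.le]
      have hexp1 : Real.exp (-(lam*t)) ≤ 1 := by
        rw [Real.exp_le_one_iff]
        have := mul_nonneg hlam0.le ht.1
        linarith
      have h3 : Real.exp (-(lam*t)) * g 0 ≤ g 0 :=
        mul_le_of_le_one_left (hg_nonneg 0) hexp1
      have h4 : C * (Real.exp (-(lam*t)) * F t) ≤ C * (M / lam) :=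
        mul_le_mul_of_nonneg_left h2 hC0.le
      have h5 : C * (M / lam) = C / lam * M := by ring
      linarith
    have hRHS0 : 0 ≤ g 0 + C / lam * M :=
      add_nonneg (hg_nonneg 0) (mul_nonneg (div_nonneg hC0.le hlam0.le) hM0)
    apply Real.iSup_le _ hRHS0
    intro t
    apply Real.iSup_le _ hRHS0
    intro ht
    exact hsup_each t ht
end

section
/- Let H be a real Banach space, S : [0,∞) → L(H) a strongly continuous semigroup with ‖S(t)‖ ≤ e^{−ωt} for all t ≥ 0 (ω > 0), n ≥ 1, and F : H → H an (n+1)-times continuously Fréchet differentiable map with ‖D^{(j)}F(y)‖ ≤ γ_j for all y ∈ H and j = 1, …, n+1, where ω > γ_1. Fix T > 0, u⁰ ∈ H, M > 0, and continuous functions ℓ, φ, u, u_1, …, u_n : [0,T] → H satisfying the mild equations u(t) = S(t)u⁰ + ∫₀ᵗ S(t−s)F(u(s))ds + εℓ(t), φ(t) = S(t)u⁰ + ∫₀ᵗ S(t−s)F(φ(s))ds, u_1(t) = ∫₀ᵗ S(t−s) D^{(1)}F(φ(s))[u_1(s)] ds + ℓ(t), and u_k(t) = ∫₀ᵗ S(t−s)(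 D^{(1)}F(φ(s))[u_k(s)] + Φ_k(φ(s))[u_1(s),…,u_{k−1}(s)] ) ds for 2 ≤ k ≤ n, with sup_{t∈[0,T]} ‖ℓ(t)‖ ≤ M and sup_{t∈[0,T]} ‖u_k(t)‖ ≤ M for k = 1, …, n. Then there is a constant C > 0, depending on n, T, ω, M and γ_1, …, γ_{n+1} but not on ε, such that for all ε ∈ (0,1]: sup_{t∈[0,T]} ‖u(t) − φ(t) − Σ_{k=1}^{n} ε^k u_k(t)‖ ≤ C ε^{n+1}. -/
open MeasureTheory

/-- The coefficient `Φ_k(x)[v₁,…,v_{k−1}] :=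
Σ_{j=2}^{k} Σ_{i₁+⋯+i_j = k, i_l ≥ 1} (1/j!) D^{(j)}F(x)[v_{i₁},…,v_{i_j}]`
of the ε-expansion. -/
noncomputable def Phi {H : Type*} [NormedAddCommGroup H] [NormedSpace ℝ H]
    (F : H → H) (k : ℕ) (x : H) (v : ℕ → H) : H :=
  ∑ j ∈ Finset.Icc 2 k, (j.factorial : ℝ)⁻¹ •
    ∑ i ∈ (Fintype.piFinset fun _ : Fin j => Finset.Icc 1 k).filter
        (fun i => ∑ l, i l = k),
      iteratedFDeriv ℝ j F x (fun l => v (i l))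


set_option linter.unusedSectionVars false
set_option maxHeartbeats 4000000
open Set Real Filter

section gron
variable {H : Type*} [NormedAddCommGroup H] [NormedSpace ℝ H]

lemma gronwall_integral {g : ℝ → ℝ} {T a b : ℝ} (hb : 0 ≤ b)
    (hg : ContinuousOn g (Set.Icc 0 T)) (hg0 : ∀ t ∈ Set.Icc 0 T, 0 ≤ g t)
    (h : ∀ t ∈ Set.Icc 0 T, g t ≤ a + b * ∫ s in (0:ℝ)..t, g s) :
    ∀ t ∈ Set.Icc 0 T, g t ≤ a * Real.exp (b * t) := by
  intro t ht
  have hT : (0:ℝ) ≤ T := le_trans ht.1 ht.2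
  have hint : ∀ x ∈ Set.Icc (0:ℝ) T, IntervalIntegrable g volume 0 x := by
    intro x hx
    refine ContinuousOn.intervalIntegrable ?_
    rw [Set.uIcc_of_le hx.1]
    exact hg.mono (Set.Icc_subset_Icc le_rfl hx.2)
  set G : ℝ → ℝ := fun x => ∫ s in (0:ℝ)..x, g s with hG
  have hGnonneg : ∀ x ∈ Set.Icc (0:ℝ) T, 0 ≤ G x := by
    intro x hx
    exact intervalIntegral.integral_nonneg hx.1 (fun s hs => hg0 s ⟨hs.1, le_trans hs.2 hx.2⟩)
  have hGcont : ContinuousOn G (Set.Icc 0 T) := by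
    have := intervalIntegral.continuousOn_primitive_interval
      (μ := volume) (a := 0) (b := T) (f := g) ?_
    · rwa [Set.uIcc_of_le hT] at this
    · rw [Set.uIcc_of_le hT]; exact hg.integrableOn_Icc
  have hG' : ∀ x ∈ Set.Ico (0:ℝ) T, HasDerivWithinAt G (g x) (Set.Ici x) x := by
    intro x hx
    have hxT : x < T := hx.2
    have hcont : ContinuousWithinAt g (Set.Ici x) x := by
      have h1 : ContinuousWithinAt g (Set.Icc x T) x :=
        (hg x ⟨hx.1, le_of_lt hxT⟩).mono (Set.Icc_subset_Icc hx.1 le_rfl)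
      rwa [ContinuousWithinAt, nhdsWithin_Icc_eq_nhdsGE hxT] at h1
    have hmeas : StronglyMeasurableAtFilter g (nhdsWithin x (Set.Ioi x)) volume := by
      refine ⟨Set.Icc x T, ?_, ((hg.mono (Set.Icc_subset_Icc hx.1 le_rfl)).aestronglyMeasurable
        measurableSet_Icc)⟩
      exact Filter.mem_of_superset (Ioc_mem_nhdsGT_of_mem ⟨le_rfl, hxT⟩) Set.Ioc_subset_Icc_self
    exact intervalIntegral.integral_hasDerivWithinAt_right (hint x ⟨hx.1, le_of_lt hxT⟩)
      hmeas (hcont.mono Set.Ioi_subset_Ici_self)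
  have key : ∀ x ∈ Set.Icc (0:ℝ) T, ‖G x‖ ≤ gronwallBound 0 b a (x - 0) := by
    refine norm_le_gronwallBound_of_norm_deriv_right_le hGcont hG' (by simp [G]) ?_
    intro x hx
    have hx' : x ∈ Set.Icc (0:ℝ) T := ⟨hx.1, le_of_lt hx.2⟩
    rw [Real.norm_eq_abs, abs_of_nonneg (hg0 x hx'), Real.norm_eq_abs,
      abs_of_nonneg (hGnonneg x hx')]
    linarith [h x hx']
  have hGle : G t ≤ gronwallBound 0 b a (t - 0) := by
    have := key t ht
    rwa [Real.norm_eq_abs, abs_of_nonneg (hGnonneg t ht)] at this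
  have hfin : a + b * gronwallBound 0 b a (t - 0) = a * Real.exp (b * t) := by
    rcases eq_or_lt_of_le hb with hb0 | hb0
    · rw [← hb0]; simp
    · rw [gronwallBound_of_K_ne_0 (ne_of_gt hb0)]
      simp only [sub_zero, zero_mul]
      field_simp
      ring
  calc g t ≤ a + b * G t := h t ht
    _ ≤ a + b * gronwallBound 0 b a (t - 0) := by nlinarith
    _ = a * Real.exp (b * t) := hfin

end gron


section taylor
variable {H : Type*} [NormedAddCommGroup H] [NormedSpace ℝ H]

lemma hasDerivAt_iter_line {F : H → H} {N j : ℕ} (hF : ContDiff ℝ (N + 1) F)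
    (hj : j ≤ N) (x δ : H) (τ : ℝ) :
    HasDerivAt (fun σ : ℝ => iteratedFDeriv ℝ j F (x + σ • δ) (fun _ => δ))
      (iteratedFDeriv ℝ (j + 1) F (x + τ • δ) (fun _ => δ)) τ := by
  have hy : HasDerivAt (fun σ : ℝ => x + σ • δ) δ τ := by
    simpa using ((hasDerivAt_id τ).smul_const δ).const_add x
  have hdiff : DifferentiableAt ℝ (iteratedFDeriv ℝ j F) (x + τ • δ) := by
    refine (hF.differentiable_iteratedFDeriv ?_).differentiableAt
    exact_mod_cast Nat.lt_succ_of_le hj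
  have h1 : HasDerivAt (fun σ : ℝ => iteratedFDeriv ℝ j F (x + σ • δ))
      (fderiv ℝ (iteratedFDeriv ℝ j F) (x + τ • δ) δ) τ :=
    hdiff.hasFDerivAt.comp_hasDerivAt τ hy
  have h2 := ((ContinuousMultilinearMap.apply ℝ (fun _ : Fin j => H) H
      (fun _ => δ)).hasFDerivAt.comp_hasDerivAt τ h1)
  exact h2
end taylor

section taylor2
variable {H : Type*} [NormedAddCommGroup H] [NormedSpace ℝ H]

lemma taylor_norm_bound {F : H → H} {N : ℕ} (hF : ContDiff ℝ (N + 1) F) {C : ℝ}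
    (hC : ∀ y : H, ‖iteratedFDeriv ℝ (N + 1) F y‖ ≤ C) (x δ : H) :
    ‖F (x + δ) - ∑ j ∈ Finset.range (N + 1),
        ((j.factorial : ℝ)⁻¹) • iteratedFDeriv ℝ j F x (fun _ => δ)‖
      ≤ C / N.factorial * ‖δ‖ ^ (N + 1) := by
  set A : ℕ → ℝ → H := fun j τ => iteratedFDeriv ℝ j F (x + τ • δ) (fun _ => δ) with hA
  set h : ℝ → H := fun τ => ∑ j ∈ Finset.range (N + 1),
    ((1 - τ) ^ j / j.factorial) • A j τ with hh
  set e : ℕ → ℝ → H := fun j τ => ((1 - τ) ^ j / j.factorial) • A (j + 1) τ with he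
  have hC0 : 0 ≤ C := le_trans (norm_nonneg _) (hC x)
  have hderiv : ∀ τ : ℝ, HasDerivAt h (e N τ) τ := by
    intro τ
    have hterm : ∀ j ∈ Finset.range (N + 1),
        HasDerivAt (fun σ : ℝ => ((1 - σ) ^ j / j.factorial) • A j σ)
          (e j τ - (if j = 0 then 0 else e (j - 1) τ)) τ := by
      intro j hj
      have hjN : j ≤ N := by simpa [Nat.lt_succ_iff] using hj
      have hAj : HasDerivAt (A j) (A (j + 1) τ) τ := hasDerivAt_iter_line hF hjN x δ τ
      have hc : HasDerivAt (fun σ : ℝ => ((1 - σ) ^ j / j.factorial))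
          ((j : ℝ) * (1 - τ) ^ (j - 1) * (-1) / j.factorial) τ :=
        (((hasDerivAt_id τ).const_sub 1).pow j).div_const _
      have hmain := hc.smul hAj
      convert hmain using 1
      · rfl
      rcases Nat.eq_zero_or_pos j with h0 | h0
      · subst h0; simp [he]
      · have hj1 : j - 1 + 1 = j := Nat.succ_pred_eq_of_pos h0
        rw [if_neg (by omega : ¬ j = 0)]
        have hfac : (j.factorial : ℝ) = j * ((j - 1).factorial : ℝ) := by
          exact_mod_cast (Nat.mul_factorial_pred (by omega)).symm
        have hscal : -((1 - τ) ^ (j - 1) / ((j - 1).factorial : ℝ))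
            = (j : ℝ) * (1 - τ) ^ (j - 1) * (-1) / j.factorial := by
          have h1 : ((j - 1).factorial : ℝ) ≠ 0 := Nat.cast_ne_zero.mpr (Nat.factorial_ne_zero _)
          have hj0 : (j : ℝ) ≠ 0 := Nat.cast_ne_zero.mpr (by omega)
          rw [hfac]
          field_simp
        calc e j τ - e (j - 1) τ
            = ((1 - τ) ^ j / j.factorial) • A (j + 1) τ
              + (-((1 - τ) ^ (j - 1) / ((j - 1).factorial : ℝ))) • A (j - 1 + 1) τ := by
              rw [neg_smul, ← sub_eq_add_neg]
          _ = ((1 - τ) ^ j / j.factorial) • A (j + 1) τ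
              + ((j : ℝ) * (1 - τ) ^ (j - 1) * (-1) / j.factorial) • A j τ := by
              rw [hscal, hj1]
    have hsum := HasDerivAt.sum hterm
    have hsum2 : ∑ j ∈ Finset.range (N + 1),
        (e j τ - (if j = 0 then 0 else e (j - 1) τ)) = e N τ := by
      rw [Finset.sum_sub_distrib,
        Finset.sum_range_succ' (fun j => if j = 0 then (0 : H) else e (j - 1) τ) N,
        Finset.sum_range_succ]
      simp
    rw [hsum2] at hsum
    convert hsum using 1
    ext σ
    simp [hh, Finset.sum_apply]
  have hbound : ∀ τ ∈ Set.Ico (0 : ℝ) 1, ‖e N τ‖ ≤ C / N.factorial * ‖δ‖ ^ (N + 1) := by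
    intro τ hτ
    have h1 : ‖A (N + 1) τ‖ ≤ C * ‖δ‖ ^ (N + 1) := by
      calc ‖A (N + 1) τ‖ ≤ ‖iteratedFDeriv ℝ (N + 1) F (x + τ • δ)‖ * ∏ _i : Fin (N + 1), ‖δ‖ :=
            ContinuousMultilinearMap.le_opNorm _ _
        _ ≤ C * ‖δ‖ ^ (N + 1) := by
            rw [Finset.prod_const, Finset.card_univ, Fintype.card_fin]
            exact mul_le_mul_of_nonneg_right (hC _) (pow_nonneg (norm_nonneg _) _)
    have h3 : |1 - τ| ≤ 1 := by
      rw [abs_le]; constructor <;> nlinarith [hτ.1, hτ.2]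
    have h2 : |(1 - τ) ^ N / (N.factorial : ℝ)| ≤ (N.factorial : ℝ)⁻¹ := by
      rw [abs_div, abs_of_nonneg (a := ((N.factorial : ℕ) : ℝ)) (Nat.cast_nonneg _),
        div_le_iff₀ (by positivity), inv_mul_cancel₀ (by positivity), abs_pow]
      exact pow_le_one₀ (abs_nonneg _) h3
    have hnorm : ‖e N τ‖ = |(1 - τ) ^ N / (N.factorial : ℝ)| * ‖A (N + 1) τ‖ := by
      simp only [he]
      rw [norm_smul, Real.norm_eq_abs]
    calc ‖e N τ‖ = |(1 - τ) ^ N / (N.factorial : ℝ)| * ‖A (N + 1) τ‖ := hnorm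
      _ ≤ (N.factorial : ℝ)⁻¹ * (C * ‖δ‖ ^ (N + 1)) :=
          mul_le_mul h2 h1 (norm_nonneg _) (by positivity)
      _ = C / N.factorial * ‖δ‖ ^ (N + 1) := by ring
  have hmvt := norm_image_sub_le_of_norm_deriv_le_segment'
    (f := h) (f' := fun τ => e N τ) (C := C / N.factorial * ‖δ‖ ^ (N + 1))
    (fun τ _ => (hderiv τ).hasDerivWithinAt) hbound 1 (by norm_num)
  have h1v : h 1 = F (x + δ) := by
    simp only [hh]
    rw [Finset.sum_eq_single 0]
    · simp [hA, iteratedFDeriv_zero_apply]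
    · intro j _ hj0
      simp [zero_pow hj0]
    · intro habs; simp at habs
  have h0v : h 0 = ∑ j ∈ Finset.range (N + 1),
      ((j.factorial : ℝ)⁻¹) • iteratedFDeriv ℝ j F x (fun _ => δ) := by
    simp only [hh]
    refine Finset.sum_congr rfl (fun j _ => ?_)
    simp [hA, one_div]
  rw [h1v, h0v] at hmvt
  simpa using hmvt

end taylor2


section comb
variable {H : Type*} [NormedAddCommGroup H] [NormedSpace ℝ H]

lemma Phi_one (F : H → H) (x : H) (v : ℕ → H) : Phi F 1 x v = 0 := by
  simp [Phi]

lemma sum_ge_card {j n : ℕ} {i : Fin j → ℕ}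
    (hi : i ∈ Fintype.piFinset fun _ : Fin j => Finset.Icc 1 n) : j ≤ ∑ l, i l := by
  have h1 : ∀ l : Fin j, 1 ≤ i l := by
    intro l
    have := Fintype.mem_piFinset.mp hi l
    rw [Finset.mem_Icc] at this
    exact this.1
  calc j = ∑ _l : Fin j, 1 := by simp
    _ ≤ ∑ l, i l := Finset.sum_le_sum (fun l _ => h1 l)

lemma fiber_step {j n : ℕ} (hj : 1 ≤ j) (f : (Fin j → ℕ) → H) :
    ∑ i ∈ (Fintype.piFinset fun _ : Fin j => Finset.Icc 1 n).filter
        (fun i => ∑ l, i l ≤ n), f i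
      = ∑ k ∈ Finset.Icc 1 n,
          ∑ i ∈ (Fintype.piFinset fun _ : Fin j => Finset.Icc 1 n).filter
              (fun i => ∑ l, i l = k), f i := by
  have hmap : ∀ i ∈ (Fintype.piFinset fun _ : Fin j => Finset.Icc 1 n).filter
      (fun i => ∑ l, i l ≤ n), (∑ l, i l) ∈ Finset.Icc 1 n := by
    intro i hi
    rw [Finset.mem_filter] at hi
    have h2 := sum_ge_card hi.1
    rw [Finset.mem_Icc]
    exact ⟨by omega, hi.2⟩
  calc ∑ i ∈ (Fintype.piFinset fun _ : Fin j => Finset.Icc 1 n).filter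
        (fun i => ∑ l, i l ≤ n), f i
      = ∑ k ∈ Finset.Icc 1 n,
          ∑ i ∈ ((Fintype.piFinset fun _ : Fin j => Finset.Icc 1 n).filter
              (fun i => ∑ l, i l ≤ n)).filter (fun i => ∑ l, i l = k), f i :=
        (Finset.sum_fiberwise_of_maps_to hmap f).symm
    _ = ∑ k ∈ Finset.Icc 1 n,
          ∑ i ∈ (Fintype.piFinset fun _ : Fin j => Finset.Icc 1 n).filter
              (fun i => ∑ l, i l = k), f i := by
        refine Finset.sum_congr rfl (fun k hk => ?_)
        rw [Finset.mem_Icc] at hk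
        rw [Finset.filter_filter]
        apply Finset.sum_congr _ (fun _ _ => rfl)
        apply Finset.filter_congr
        intro i _
        constructor
        · intro hh; exact hh.2
        · intro hh; exact ⟨by omega, hh⟩
end comb

section comb2
variable {H : Type*} [NormedAddCommGroup H] [NormedSpace ℝ H]

lemma filter_Icc_eq {j n k : ℕ} (hkn : k ≤ n) :
    (Fintype.piFinset fun _ : Fin j => Finset.Icc 1 n).filter (fun i => ∑ l, i l = k)
      = (Fintype.piFinset fun _ : Fin j => Finset.Icc 1 k).filter (fun i => ∑ l, i l = k) := by
  ext i
  simp only [Finset.mem_filter, Fintype.mem_piFinset, Finset.mem_Icc]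
  constructor
  · rintro ⟨h1, h2⟩
    refine ⟨fun l => ⟨(h1 l).1, ?_⟩, h2⟩
    calc i l ≤ ∑ l', i l' :=
          Finset.single_le_sum (fun l' _ => Nat.zero_le (i l')) (Finset.mem_univ l)
      _ = k := h2
  · rintro ⟨h1, h2⟩
    exact ⟨fun l => ⟨(h1 l).1, le_trans (h1 l).2 hkn⟩, h2⟩

lemma filter_eq_empty_of_lt {j n k : ℕ} (hjk : k < j) :
    (Fintype.piFinset fun _ : Fin j => Finset.Icc 1 n).filter (fun i => ∑ l, i l = k) = ∅ := by
  rw [Finset.filter_eq_empty_iff]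
  intro i hi
  have := sum_ge_card hi
  omega

lemma inner_eq (F : H → H) {n k : ℕ} (hk1 : 1 ≤ k) (hkn : k ≤ n) (x : H) (w : ℕ → H) :
    ∑ j ∈ Finset.Icc 1 n, (j.factorial : ℝ)⁻¹ •
        ∑ i ∈ (Fintype.piFinset fun _ : Fin j => Finset.Icc 1 n).filter
            (fun i => ∑ l, i l = k),
          iteratedFDeriv ℝ j F x (fun l => w (i l))
      = (iteratedFDeriv ℝ 1 F x fun _ => w k) + Phi F k x w := by
  have hsplit : Finset.Icc 1 n = insert 1 (Finset.Icc 2 n) := by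
    ext j; simp only [Finset.mem_Icc, Finset.mem_insert]; omega
  have hsum : ∀ f : ℕ → H, ∑ j ∈ Finset.Icc 1 n, f j = f 1 + ∑ j ∈ Finset.Icc 2 n, f j := by
    intro f; rw [hsplit, Finset.sum_insert (by simp)]
  rw [hsum (fun j => (j.factorial : ℝ)⁻¹ •
        ∑ i ∈ (Fintype.piFinset fun _ : Fin j => Finset.Icc 1 n).filter
            (fun i => ∑ l, i l = k),
          iteratedFDeriv ℝ j F x (fun l => w (i l)))]
  congr 1
  · have hset : (Fintype.piFinset fun _ : Fin 1 => Finset.Icc 1 n).filter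
        (fun i => ∑ l, i l = k) = {fun _ => k} := by
      ext i
      simp only [Finset.mem_filter, Fintype.mem_piFinset, Finset.mem_singleton, Fin.sum_univ_one]
      constructor
      · rintro ⟨_, h2⟩
        funext l
        have hl : l = 0 := Subsingleton.elim _ _
        rw [hl, h2]
      · rintro rfl
        exact ⟨fun _ => Finset.mem_Icc.mpr ⟨hk1, hkn⟩, rfl⟩
    rw [hset, Finset.sum_singleton]
    simp
  · rw [Phi]
    refine Eq.symm ?_
    calc ∑ j ∈ Finset.Icc 2 k, (j.factorial : ℝ)⁻¹ •
          ∑ i ∈ (Fintype.piFinset fun _ : Fin j => Finset.Icc 1 k).filter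
              (fun i => ∑ l, i l = k),
            iteratedFDeriv ℝ j F x (fun l => w (i l))
        = ∑ j ∈ Finset.Icc 2 k, (j.factorial : ℝ)⁻¹ •
          ∑ i ∈ (Fintype.piFinset fun _ : Fin j => Finset.Icc 1 n).filter
              (fun i => ∑ l, i l = k),
            iteratedFDeriv ℝ j F x (fun l => w (i l)) := by
          refine Finset.sum_congr rfl (fun j _ => ?_)
          rw [filter_Icc_eq hkn]
      _ = ∑ j ∈ Finset.Icc 2 n, (j.factorial : ℝ)⁻¹ •
          ∑ i ∈ (Fintype.piFinset fun _ : Fin j => Finset.Icc 1 n).filter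
              (fun i => ∑ l, i l = k),
            iteratedFDeriv ℝ j F x (fun l => w (i l)) := by
          refine Finset.sum_subset (Finset.Icc_subset_Icc_right hkn) ?_
          intro j hjn hjk
          rw [Finset.mem_Icc] at hjn
          rw [Finset.mem_Icc] at hjk
          rw [filter_eq_empty_of_lt (by omega), Finset.sum_empty, smul_zero]

lemma expand_multilinear (F : H → H) {n : ℕ} (hn : 1 ≤ n) (x : H) (w : ℕ → H) (ε : ℝ) :
    ∑ j ∈ Finset.Icc 1 n, (j.factorial : ℝ)⁻¹ •
        iteratedFDeriv ℝ j F x (fun _ => ∑ k ∈ Finset.Icc 1 n, ε ^ k • w k)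
      = (∑ k ∈ Finset.Icc 1 n, ε ^ k •
          ((iteratedFDeriv ℝ 1 F x fun _ => w k) + Phi F k x w))
        + ∑ j ∈ Finset.Icc 1 n, (j.factorial : ℝ)⁻¹ •
            ∑ i ∈ (Fintype.piFinset fun _ : Fin j => Finset.Icc 1 n).filter
                (fun i => ¬ ∑ l, i l ≤ n),
              ε ^ (∑ l, i l) • iteratedFDeriv ℝ j F x (fun l => w (i l)) := by
  have expand_j : ∀ j : ℕ,
      iteratedFDeriv ℝ j F x (fun _ => ∑ k ∈ Finset.Icc 1 n, ε ^ k • w k)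
        = ∑ i ∈ Fintype.piFinset (fun _ : Fin j => Finset.Icc 1 n),
            ε ^ (∑ l, i l) • iteratedFDeriv ℝ j F x (fun l => w (i l)) := by
    intro j
    rw [ContinuousMultilinearMap.map_sum_finset (iteratedFDeriv ℝ j F x)
      (fun _ k => ε ^ k • w k) (fun _ => Finset.Icc 1 n)]
    refine Finset.sum_congr rfl (fun i _ => ?_)
    rw [ContinuousMultilinearMap.map_smul_univ (iteratedFDeriv ℝ j F x)
      (fun l => ε ^ (i l)) (fun l => w (i l))]
    rw [Finset.prod_pow_eq_pow_sum]
  simp only [expand_j]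
  have split_j : ∀ j : ℕ,
      (∑ i ∈ Fintype.piFinset (fun _ : Fin j => Finset.Icc 1 n),
          ε ^ (∑ l, i l) • iteratedFDeriv ℝ j F x (fun l => w (i l)))
        = (∑ i ∈ (Fintype.piFinset fun _ : Fin j => Finset.Icc 1 n).filter
              (fun i => ∑ l, i l ≤ n),
            ε ^ (∑ l, i l) • iteratedFDeriv ℝ j F x (fun l => w (i l)))
          + ∑ i ∈ (Fintype.piFinset fun _ : Fin j => Finset.Icc 1 n).filter
              (fun i => ¬ ∑ l, i l ≤ n),
            ε ^ (∑ l, i l) • iteratedFDeriv ℝ j F x (fun l => w (i l)) :=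
    fun j => (Finset.sum_filter_add_sum_filter_not _ _ _).symm
  simp only [split_j, smul_add, Finset.sum_add_distrib]
  congr 1
  calc ∑ j ∈ Finset.Icc 1 n, (j.factorial : ℝ)⁻¹ •
        ∑ i ∈ (Fintype.piFinset fun _ : Fin j => Finset.Icc 1 n).filter
            (fun i => ∑ l, i l ≤ n),
          ε ^ (∑ l, i l) • iteratedFDeriv ℝ j F x (fun l => w (i l))
      = ∑ j ∈ Finset.Icc 1 n, ∑ k ∈ Finset.Icc 1 n, (j.factorial : ℝ)⁻¹ •
          ∑ i ∈ (Fintype.piFinset fun _ : Fin j => Finset.Icc 1 n).filter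
              (fun i => ∑ l, i l = k),
            ε ^ (∑ l, i l) • iteratedFDeriv ℝ j F x (fun l => w (i l)) := by
        refine Finset.sum_congr rfl (fun j hj => ?_)
        rw [Finset.mem_Icc] at hj
        rw [fiber_step hj.1, Finset.smul_sum]
    _ = ∑ k ∈ Finset.Icc 1 n, ε ^ k • ∑ j ∈ Finset.Icc 1 n, (j.factorial : ℝ)⁻¹ •
          ∑ i ∈ (Fintype.piFinset fun _ : Fin j => Finset.Icc 1 n).filter
              (fun i => ∑ l, i l = k),
            iteratedFDeriv ℝ j F x (fun l => w (i l)) := by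
        rw [Finset.sum_comm]
        refine Finset.sum_congr rfl (fun k _ => ?_)
        rw [Finset.smul_sum]
        refine Finset.sum_congr rfl (fun j _ => ?_)
        have hinner : ∑ i ∈ (Fintype.piFinset fun _ : Fin j => Finset.Icc 1 n).filter
              (fun i => ∑ l, i l = k),
            ε ^ (∑ l, i l) • iteratedFDeriv ℝ j F x (fun l => w (i l))
            = ε ^ k • ∑ i ∈ (Fintype.piFinset fun _ : Fin j => Finset.Icc 1 n).filter
              (fun i => ∑ l, i l = k),
            iteratedFDeriv ℝ j F x (fun l => w (i l)) := by
          rw [Finset.smul_sum]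
          refine Finset.sum_congr rfl (fun i hi => ?_)
          rw [Finset.mem_filter] at hi
          rw [hi.2]
        rw [hinner, smul_comm]
    _ = ∑ k ∈ Finset.Icc 1 n, ε ^ k •
          ((iteratedFDeriv ℝ 1 F x fun _ => w k) + Phi F k x w) := by
        refine Finset.sum_congr rfl (fun k hk => ?_)
        rw [Finset.mem_Icc] at hk
        rw [inner_eq F hk.1 hk.2]
    _ = (∑ k ∈ Finset.Icc 1 n, ε ^ k • (iteratedFDeriv ℝ 1 F x fun _ => w k))
        + ∑ k ∈ Finset.Icc 1 n, ε ^ k • Phi F k x w := by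
        simp only [smul_add, Finset.sum_add_distrib]

end comb2


section cont
variable {H : Type*} [NormedAddCommGroup H] [NormedSpace ℝ H]

lemma contOn_S_integrand {S : ℝ → H →L[ℝ] H}
    (hScont : ∀ x : H, ContinuousOn (fun t => S t x) (Set.Ici (0:ℝ)))
    (hS1 : ∀ t ≥ (0:ℝ), ‖S t‖ ≤ 1) {t : ℝ} {G : ℝ → H}
    (hG : ContinuousOn G (Set.Icc 0 t)) :
    ContinuousOn (fun s => S (t - s) (G s)) (Set.Icc 0 t) := by
  intro s₀ hs₀
  have hts : ContinuousWithinAt (fun s => S (t - s) (G s₀)) (Set.Icc 0 t) s₀ := by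
    have hsub : ContinuousWithinAt (fun s : ℝ => t - s) (Set.Icc 0 t) s₀ :=
      (continuous_const.sub continuous_id).continuousWithinAt
    refine ContinuousWithinAt.comp (hScont (G s₀) (t - s₀) ?_) hsub ?_
    · simp only [Set.mem_Ici]; linarith [hs₀.2]
    · intro s hs
      simp only [Set.mem_Ici]
      linarith [hs.2]
  have key : Filter.Tendsto (fun s => S (t - s) (G s) - S (t - s₀) (G s₀))
      (nhdsWithin s₀ (Set.Icc 0 t)) (nhds 0) := by
    have hG0 : Filter.Tendsto (fun s => ‖G s - G s₀‖)
        (nhdsWithin s₀ (Set.Icc 0 t)) (nhds 0) :=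
      tendsto_iff_norm_sub_tendsto_zero.mp (hG s₀ hs₀)
    have hS0 : Filter.Tendsto (fun s => ‖S (t - s) (G s₀) - S (t - s₀) (G s₀)‖)
        (nhdsWithin s₀ (Set.Icc 0 t)) (nhds 0) :=
      tendsto_iff_norm_sub_tendsto_zero.mp hts
    have hlim : Filter.Tendsto
        (fun s => ‖G s - G s₀‖ + ‖S (t - s) (G s₀) - S (t - s₀) (G s₀)‖)
        (nhdsWithin s₀ (Set.Icc 0 t)) (nhds 0) := by
      simpa using hG0.add hS0
    refine squeeze_zero_norm' ?_ hlim
    filter_upwards [self_mem_nhdsWithin] with s hs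
    have hdecomp : S (t - s) (G s) - S (t - s₀) (G s₀)
        = S (t - s) (G s - G s₀) + (S (t - s) (G s₀) - S (t - s₀) (G s₀)) := by
      rw [map_sub]; abel
    rw [hdecomp]
    refine le_trans (norm_add_le _ _) (add_le_add_left ?_ _)
    calc ‖S (t - s) (G s - G s₀)‖ ≤ ‖S (t - s)‖ * ‖G s - G s₀‖ :=
          ContinuousLinearMap.le_opNorm _ _
      _ ≤ 1 * ‖G s - G s₀‖ := by
          have h0 : (0:ℝ) ≤ t - s := by linarith [hs.2]
          exact mul_le_mul_of_nonneg_right (hS1 _ h0) (norm_nonneg _)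
      _ = ‖G s - G s₀‖ := one_mul _
  exact tendsto_sub_nhds_zero_iff.mp key

lemma contOn_iter_apply {F : H → H} {N : ℕ} (hF : ContDiff ℝ (N + 1) F) {j : ℕ}
    (hj : j ≤ N + 1) {A : Set ℝ} {φ : ℝ → H} (hφ : ContinuousOn φ A) (m : Fin j → ℝ → H)
    (hm : ∀ l, ContinuousOn (m l) A) :
    ContinuousOn (fun s => iteratedFDeriv ℝ j F (φ s) (fun l => m l s)) A := by
  have h1 : Continuous (iteratedFDeriv ℝ j F) :=
    hF.continuous_iteratedFDeriv (by exact_mod_cast hj)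
  have h2 : ContinuousOn (fun s => ((iteratedFDeriv ℝ j F (φ s)), fun l => m l s)) A :=
    (h1.comp_continuousOn hφ).prodMk (continuousOn_pi.mpr hm)
  exact continuous_eval.comp_continuousOn h2

end cont


theorem small_noise_asymptotic_expansion
    {H : Type*} [NormedAddCommGroup H] [NormedSpace ℝ H] [CompleteSpace H]
    (S : ℝ → H →L[ℝ] H) (ω : ℝ) (hω : 0 < ω)
    (hS0 : S 0 = ContinuousLinearMap.id ℝ H)
    (hSadd : ∀ t ≥ (0:ℝ), ∀ s ≥ (0:ℝ), S (t + s) = (S t).comp (S s))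
    (hScont : ∀ x : H, ContinuousOn (fun t => S t x) (Set.Ici (0:ℝ)))
    (hSnorm : ∀ t ≥ (0:ℝ), ‖S t‖ ≤ Real.exp (-ω * t))
    (n : ℕ) (hn : 1 ≤ n)
    (F : H → H) (hF : ContDiff ℝ (n + 1) F)
    (γ : ℕ → ℝ)
    (hγ : ∀ j ∈ Finset.Icc 1 (n + 1), ∀ y : H, ‖iteratedFDeriv ℝ j F y‖ ≤ γ j)
    (hωγ : γ 1 < ω)
    (T : ℝ) (hT : 0 < T) (u0 : H) (M : ℝ) (hM : 0 < M)
    (ℓ φ : ℝ → H) (u : ℝ → ℝ → H) (uk : ℕ → ℝ → H)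
    (hℓc : ContinuousOn ℓ (Set.Icc (0:ℝ) T))
    (hφc : ContinuousOn φ (Set.Icc (0:ℝ) T))
    (huc : ∀ ε ∈ Set.Ioc (0:ℝ) 1, ContinuousOn (u ε) (Set.Icc (0:ℝ) T))
    (hukc : ∀ k ∈ Finset.Icc 1 n, ContinuousOn (uk k) (Set.Icc (0:ℝ) T))
    (hu : ∀ ε ∈ Set.Ioc (0:ℝ) 1, ∀ t ∈ Set.Icc (0:ℝ) T,
      u ε t = S t u0 + (∫ s in (0:ℝ)..t, S (t - s) (F (u ε s))) + ε • ℓ t)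
    (hφ : ∀ t ∈ Set.Icc (0:ℝ) T,
      φ t = S t u0 + ∫ s in (0:ℝ)..t, S (t - s) (F (φ s)))
    (hu1 : ∀ t ∈ Set.Icc (0:ℝ) T,
      uk 1 t = (∫ s in (0:ℝ)..t,
        S (t - s) (iteratedFDeriv ℝ 1 F (φ s) fun _ => uk 1 s)) + ℓ t)
    (huk : ∀ k, 2 ≤ k → k ≤ n → ∀ t ∈ Set.Icc (0:ℝ) T,
      uk k t = ∫ s in (0:ℝ)..t, S (t - s)
        ((iteratedFDeriv ℝ 1 F (φ s) fun _ => uk k s)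
          + Phi F k (φ s) (fun i => uk i s)))
    (hℓM : ∀ t ∈ Set.Icc (0:ℝ) T, ‖ℓ t‖ ≤ M)
    (hukM : ∀ k ∈ Finset.Icc 1 n, ∀ t ∈ Set.Icc (0:ℝ) T, ‖uk k t‖ ≤ M) :
    ∃ C > (0:ℝ), ∀ ε ∈ Set.Ioc (0:ℝ) 1, ∀ t ∈ Set.Icc (0:ℝ) T,
      ‖u ε t - φ t - ∑ k ∈ Finset.Icc 1 n, ε ^ k • uk k t‖ ≤ C * ε ^ (n + 1) := by
  -- ## Preliminaries
  have hγnonneg : ∀ j ∈ Finset.Icc 1 (n + 1), 0 ≤ γ j :=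
    fun j hj => le_trans (norm_nonneg _) (hγ j hj 0)
  have hγ1nonneg : 0 ≤ γ 1 := hγnonneg 1 (Finset.mem_Icc.mpr ⟨le_rfl, by omega⟩)
  have hγn1 : 0 ≤ γ (n + 1) := hγnonneg (n + 1) (Finset.mem_Icc.mpr ⟨by omega, le_rfl⟩)
  have hS1 : ∀ t ≥ (0:ℝ), ‖S t‖ ≤ 1 := by
    intro t ht
    refine (hSnorm t ht).trans ?_
    rw [Real.exp_le_one_iff]
    nlinarith
  have hFc : Continuous F := hF.continuous
  have hLip : ∀ a b : H, ‖F a - F b‖ ≤ γ 1 * ‖a - b‖ := by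
    intro a b
    have hder : ∀ y : H, ‖fderiv ℝ F y‖ ≤ γ 1 := by
      intro y
      refine ContinuousLinearMap.opNorm_le_bound _ hγ1nonneg (fun z => ?_)
      have h1 : fderiv ℝ F y z = iteratedFDeriv ℝ 1 F y (fun _ => z) := by
        rw [iteratedFDeriv_one_apply]
      rw [h1]
      calc ‖iteratedFDeriv ℝ 1 F y (fun _ => z)‖
          ≤ ‖iteratedFDeriv ℝ 1 F y‖ * ∏ _i : Fin 1, ‖z‖ :=
            ContinuousMultilinearMap.le_opNorm _ _
        _ ≤ γ 1 * ‖z‖ := by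
            rw [Finset.prod_const, Finset.card_univ, Fintype.card_fin, pow_one]
            exact mul_le_mul_of_nonneg_right (hγ 1 (Finset.mem_Icc.mpr ⟨le_rfl, by omega⟩) y)
              (norm_nonneg z)
    have hdiff : ∀ y : H, DifferentiableAt ℝ F y := by
      intro y
      exact (hF.differentiable (by simp)).differentiableAt
    exact convex_univ.norm_image_sub_le_of_norm_fderiv_le (fun y _ => hdiff y)
      (fun y _ => hder y) (Set.mem_univ b) (Set.mem_univ a)
  have hInt : ∀ t ∈ Set.Icc (0:ℝ) T, ∀ G : ℝ → H, ContinuousOn G (Set.Icc 0 T) →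
      IntervalIntegrable (fun s => S (t - s) (G s)) volume 0 t := by
    intro t ht G hG
    refine ContinuousOn.intervalIntegrable ?_
    rw [Set.uIcc_of_le ht.1]
    exact contOn_S_integrand hScont hS1 (hG.mono (Set.Icc_subset_Icc_right ht.2))
  set K1 : ℝ := M * Real.exp (γ 1 * T) with hK1def
  have hK1pos : 0 < K1 := by positivity
  -- ## Step 1 : `‖u ε t - φ t‖ ≤ K1 * ε`
  have step1 : ∀ ε ∈ Set.Ioc (0:ℝ) 1, ∀ t ∈ Set.Icc (0:ℝ) T,
      ‖u ε t - φ t‖ ≤ K1 * ε := by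
    intro ε hε
    have hεpos := hε.1
    have gcont : ContinuousOn (fun s => ‖u ε s - φ s‖) (Set.Icc 0 T) :=
      ((huc ε hε).sub hφc).norm
    have hineq : ∀ t ∈ Set.Icc (0:ℝ) T,
        ‖u ε t - φ t‖ ≤ ε * M + γ 1 * ∫ s in (0:ℝ)..t, ‖u ε s - φ s‖ := by
      intro t ht
      have hrep : u ε t - φ t
          = (∫ s in (0:ℝ)..t, S (t - s) (F (u ε s) - F (φ s))) + ε • ℓ t := by
        rw [hu ε hε t ht, hφ t ht]
        have hsub : (∫ s in (0:ℝ)..t, S (t - s) (F (u ε s)))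
            - (∫ s in (0:ℝ)..t, S (t - s) (F (φ s)))
            = ∫ s in (0:ℝ)..t, S (t - s) (F (u ε s) - F (φ s)) := by
          rw [← intervalIntegral.integral_sub (hInt t ht (fun s => F (u ε s)) (hFc.comp_continuousOn (huc ε hε)))
            (hInt t ht (fun s => F (φ s)) (hFc.comp_continuousOn hφc))]
          refine intervalIntegral.integral_congr (fun s _ => ?_)
          rw [map_sub]
        rw [← hsub]
        abel
      rw [hrep]
      refine le_trans (norm_add_le _ _) ?_
      have hbnd2 : ‖ε • ℓ t‖ ≤ ε * M := by
        rw [norm_smul, Real.norm_eq_abs, abs_of_pos hεpos]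
        exact mul_le_mul_of_nonneg_left (hℓM t ht) (le_of_lt hεpos)
      have hgint : IntervalIntegrable (fun s => γ 1 * ‖u ε s - φ s‖) volume 0 t := by
        refine ContinuousOn.intervalIntegrable ?_
        rw [Set.uIcc_of_le ht.1]
        exact continuousOn_const.mul (gcont.mono (Set.Icc_subset_Icc_right ht.2))
      have hbnd1 : ‖∫ s in (0:ℝ)..t, S (t - s) (F (u ε s) - F (φ s))‖
          ≤ γ 1 * ∫ s in (0:ℝ)..t, ‖u ε s - φ s‖ := by
        have hae : ∀ᵐ s ∂(volume.restrict (Set.uIoc 0 t)),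
            ‖S (t - s) (F (u ε s) - F (φ s))‖ ≤ γ 1 * ‖u ε s - φ s‖ := by
          refine (ae_restrict_mem measurableSet_uIoc).mono (fun s hs => ?_)
          rw [Set.uIoc_of_le ht.1] at hs
          have hts : (0:ℝ) ≤ t - s := by linarith [hs.2]
          calc ‖S (t - s) (F (u ε s) - F (φ s))‖
              ≤ ‖S (t - s)‖ * ‖F (u ε s) - F (φ s)‖ := ContinuousLinearMap.le_opNorm _ _
            _ ≤ 1 * ‖F (u ε s) - F (φ s)‖ :=
                mul_le_mul_of_nonneg_right (hS1 _ hts) (norm_nonneg _)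
            _ = ‖F (u ε s) - F (φ s)‖ := one_mul _
            _ ≤ γ 1 * ‖u ε s - φ s‖ := hLip _ _
        refine le_trans (le_trans (intervalIntegral.norm_integral_le_of_norm_le ht.1 (by rw [Set.uIoc_of_le ht.1] at hae; exact (ae_restrict_iff' measurableSet_Ioc).mp hae) hgint) (le_abs_self _)) ?_
        rw [abs_of_nonneg, intervalIntegral.integral_const_mul]
        refine intervalIntegral.integral_nonneg ht.1 (fun s _ => ?_)
        positivity
      linarith
    intro t ht
    have := gronwall_integral (a := ε * M) hγ1nonneg gcont
      (fun s _ => norm_nonneg _) hineq t ht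
    calc ‖u ε t - φ t‖ ≤ ε * M * Real.exp (γ 1 * t) := this
      _ ≤ ε * M * Real.exp (γ 1 * T) := by
          have h1 : Real.exp (γ 1 * t) ≤ Real.exp (γ 1 * T) :=
            Real.exp_le_exp.mpr (mul_le_mul_of_nonneg_left ht.2 hγ1nonneg)
          have h2 : 0 ≤ ε * M := by positivity
          nlinarith
      _ = K1 * ε := by rw [hK1def]; ring
  -- ## Constants
  set A1 : ℝ := γ (n + 1) / n.factorial * K1 ^ (n + 1) with hA1def
  set B : ℝ := ∑ j ∈ Finset.Icc 1 n,
    (j.factorial : ℝ)⁻¹ * (γ j * j * (K1 + n * M) ^ (j - 1)) with hBdef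
  set A2 : ℝ := ∑ j ∈ Finset.Icc 1 n,
    (j.factorial : ℝ)⁻¹ * ((n : ℝ) ^ j * (γ j * M ^ j)) with hA2def
  have hA1 : 0 ≤ A1 := by positivity
  have hγj : ∀ j ∈ Finset.Icc 1 n, 0 ≤ γ j := by
    intro j hj
    rw [Finset.mem_Icc] at hj
    exact hγnonneg j (Finset.mem_Icc.mpr ⟨hj.1, by omega⟩)
  have hKnM : 0 ≤ K1 + n * M := by positivity
  have hB : 0 ≤ B := by
    refine Finset.sum_nonneg (fun j hj => ?_)
    have := hγj j hj
    positivity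
  have hA2 : 0 ≤ A2 := by
    refine Finset.sum_nonneg (fun j hj => ?_)
    have := hγj j hj
    positivity
  refine ⟨(A1 + A2) * T * Real.exp (B * T) + 1, by positivity, ?_⟩
  intro ε hε
  have hεpos := hε.1
  have hε1 := hε.2
  have hεpow : (0:ℝ) < ε ^ (n + 1) := by positivity
  -- the perturbation term
  set W : ℝ → H := fun s => ∑ k ∈ Finset.Icc 1 n, ε ^ k •
    ((iteratedFDeriv ℝ 1 F (φ s) fun _ => uk k s)
      + Phi F k (φ s) (fun i => uk i s)) with hWdef
  set E : ℝ → H := fun s => F (u ε s) - F (φ s) - W s with hEdef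
  -- continuity facts
  have hgkc : ∀ k ∈ Finset.Icc 1 n, ContinuousOn
      (fun s => (iteratedFDeriv ℝ 1 F (φ s) fun _ => uk k s)
        + Phi F k (φ s) (fun i => uk i s)) (Set.Icc 0 T) := by
    intro k hk
    have hk' := Finset.mem_Icc.mp hk
    have h1 : ContinuousOn (fun s => iteratedFDeriv ℝ 1 F (φ s) fun _ => uk k s)
        (Set.Icc 0 T) :=
      contOn_iter_apply hF (by omega) hφc _ (fun _ => hukc k hk)
    refine h1.add ?_
    simp only [Phi]
    refine continuousOn_finset_sum _ (fun j hj => ContinuousOn.const_smul ?_ _)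
    refine continuousOn_finset_sum _ (fun i hi => ?_)
    have hj' := Finset.mem_Icc.mp hj
    refine contOn_iter_apply hF (by omega) hφc _ (fun l => ?_)
    apply hukc
    rw [Finset.mem_filter] at hi
    have := Fintype.mem_piFinset.mp hi.1 l
    rw [Finset.mem_Icc] at this ⊢
    omega
  have hWc : ContinuousOn W (Set.Icc 0 T) := by
    rw [hWdef]
    exact continuousOn_finset_sum _ (fun k hk => ((hgkc k hk).const_smul _))
  have hgRc : ContinuousOn
      (fun s => ‖u ε s - φ s - ∑ k ∈ Finset.Icc 1 n, ε ^ k • uk k s‖) (Set.Icc 0 T) := by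
    refine ContinuousOn.norm (((huc ε hε).sub hφc).sub ?_)
    exact continuousOn_finset_sum _ (fun k hk => (hukc k hk).const_smul _)
  -- ## Representation of the remainder
  have hrep : ∀ t ∈ Set.Icc (0:ℝ) T,
      u ε t - φ t - ∑ k ∈ Finset.Icc 1 n, ε ^ k • uk k t
        = ∫ s in (0:ℝ)..t, S (t - s) (E s) := by
    intro t ht
    have huk' : ∀ k ∈ Finset.Icc 1 n, uk k t
        = (∫ s in (0:ℝ)..t, S (t - s) ((iteratedFDeriv ℝ 1 F (φ s) fun _ => uk k s)
            + Phi F k (φ s) (fun i => uk i s)))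
          + (if k = 1 then ℓ t else 0) := by
      intro k hk
      have hk' := Finset.mem_Icc.mp hk
      rcases eq_or_lt_of_le hk'.1 with h1 | h1
      · rw [← h1, if_pos rfl]
        simp only [Phi_one, add_zero]
        exact hu1 t ht
      · rw [if_neg (by omega), add_zero]
        exact huk k (by omega) hk'.2 t ht
    have hsum_uk : ∑ k ∈ Finset.Icc 1 n, ε ^ k • uk k t
        = (∑ k ∈ Finset.Icc 1 n, ε ^ k • ∫ s in (0:ℝ)..t, S (t - s)
            ((iteratedFDeriv ℝ 1 F (φ s) fun _ => uk k s)
              + Phi F k (φ s) (fun i => uk i s))) + ε • ℓ t := by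
      rw [Finset.sum_congr rfl (fun k hk => congrArg (ε ^ k • ·) (huk' k hk))]
      simp only [smul_add, smul_ite, smul_zero, Finset.sum_add_distrib]
      congr 1
      rw [Finset.sum_ite_eq' (Finset.Icc 1 n) 1 (fun k => ε ^ k • ℓ t),
        if_pos (Finset.mem_Icc.mpr ⟨le_rfl, hn⟩), pow_one]
    have hXrw : (∑ k ∈ Finset.Icc 1 n, ε ^ k • ∫ s in (0:ℝ)..t, S (t - s)
          ((iteratedFDeriv ℝ 1 F (φ s) fun _ => uk k s)
            + Phi F k (φ s) (fun i => uk i s)))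
        = ∫ s in (0:ℝ)..t, S (t - s) (W s) := by
      calc (∑ k ∈ Finset.Icc 1 n, ε ^ k • ∫ s in (0:ℝ)..t, S (t - s)
            ((iteratedFDeriv ℝ 1 F (φ s) fun _ => uk k s)
              + Phi F k (φ s) (fun i => uk i s)))
          = ∑ k ∈ Finset.Icc 1 n, ∫ s in (0:ℝ)..t, ε ^ k • S (t - s)
              ((iteratedFDeriv ℝ 1 F (φ s) fun _ => uk k s)
                + Phi F k (φ s) (fun i => uk i s)) := by
            exact Finset.sum_congr rfl (fun k _ =>
              (intervalIntegral.integral_smul (ε ^ k) _).symm)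
        _ = ∫ s in (0:ℝ)..t, ∑ k ∈ Finset.Icc 1 n, ε ^ k • S (t - s)
              ((iteratedFDeriv ℝ 1 F (φ s) fun _ => uk k s)
                + Phi F k (φ s) (fun i => uk i s)) := by
            refine (intervalIntegral.integral_finset_sum (fun k hk => ?_)).symm
            exact (hInt t ht _ (hgkc k hk)).smul (ε ^ k)
        _ = ∫ s in (0:ℝ)..t, S (t - s) (W s) := by
            refine intervalIntegral.integral_congr (fun s _ => ?_)
            rw [hWdef]
            rw [map_sum]
            refine Finset.sum_congr rfl (fun k _ => ?_)
            rw [(S (t - s)).map_smul]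
    have hIu := hInt t ht (fun s => F (u ε s)) (hFc.comp_continuousOn (huc ε hε))
    have hIφ := hInt t ht (fun s => F (φ s)) (hFc.comp_continuousOn hφc)
    have hIW := hInt t ht _ hWc
    have hkey : ∀ a b c d x : H, (a + b + c) - (a + d) - (x + c) = b - d - x := by
      intro a b c d x
      abel
    rw [hu ε hε t ht, hφ t ht, hsum_uk, hXrw, hkey]
    rw [← intervalIntegral.integral_sub hIu hIφ,
      ← intervalIntegral.integral_sub (hIu.sub hIφ) hIW]
    refine intervalIntegral.integral_congr (fun s _ => ?_)
    rw [← map_sub, ← map_sub]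
  -- ## Pointwise bound on `E`
  have hEbound : ∀ s ∈ Set.Icc (0:ℝ) T, ‖E s‖ ≤ (A1 + A2) * ε ^ (n + 1)
      + B * ‖u ε s - φ s - ∑ k ∈ Finset.Icc 1 n, ε ^ k • uk k s‖ := by
    intro s hs
    set x : H := φ s with hxdef
    set δ : H := u ε s - φ s with hδdef
    set vv : H := ∑ k ∈ Finset.Icc 1 n, ε ^ k • uk k s with hvvdef
    have hxδ : u ε s = x + δ := by rw [hδdef, hxdef]; abel
    have hδK : ‖δ‖ ≤ K1 * ε := step1 ε hε s hs
    have hδK1 : ‖δ‖ ≤ K1 := by nlinarith [hδK, hK1pos]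
    have hvnorm : ‖vv‖ ≤ n * M := by
      rw [hvvdef]
      refine le_trans (norm_sum_le _ _) ?_
      have hbnd : ∀ k ∈ Finset.Icc 1 n, ‖ε ^ k • uk k s‖ ≤ M := by
        intro k hk
        rw [norm_smul, Real.norm_eq_abs, abs_of_pos (by positivity)]
        have h1 : ε ^ k ≤ 1 := pow_le_one₀ (le_of_lt hεpos) hε1
        have h2 : ‖uk k s‖ ≤ M := hukM k hk s hs
        nlinarith [norm_nonneg (uk k s)]
      refine le_trans (Finset.sum_le_card_nsmul _ _ M hbnd) ?_
      rw [Nat.card_Icc, nsmul_eq_mul]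
      simp
    -- Taylor remainder bound
    have hrange : ∀ f : ℕ → H, ∑ j ∈ Finset.range (n + 1), f j
        = f 0 + ∑ j ∈ Finset.Icc 1 n, f j := by
      intro f
      rw [show Finset.range (n + 1) = insert 0 (Finset.Icc 1 n) by
        ext j; simp only [Finset.mem_range, Finset.mem_insert, Finset.mem_Icc]; omega]
      rw [Finset.sum_insert (by simp)]
    set P : H → H := fun z => ∑ j ∈ Finset.Icc 1 n,
      (j.factorial : ℝ)⁻¹ • iteratedFDeriv ℝ j F x (fun _ => z) with hPdef
    have htay : ‖F (x + δ) - (F x + P δ)‖ ≤ A1 * ε ^ (n + 1) := by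
      have h1 := taylor_norm_bound hF
        (fun y => hγ (n + 1) (Finset.mem_Icc.mpr ⟨by omega, le_rfl⟩) y) x δ
      have h2 : ∑ j ∈ Finset.range (n + 1),
          ((j.factorial : ℝ)⁻¹) • iteratedFDeriv ℝ j F x (fun _ => δ) = F x + P δ := by
        rw [hrange (fun j => ((j.factorial : ℝ)⁻¹) • iteratedFDeriv ℝ j F x (fun _ => δ))]
        congr 1
        simp [iteratedFDeriv_zero_apply]
      rw [h2] at h1
      refine h1.trans ?_
      have h3 : ‖δ‖ ^ (n + 1) ≤ (K1 * ε) ^ (n + 1) :=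
        pow_le_pow_left₀ (norm_nonneg _) hδK _
      have h4 : 0 ≤ γ (n + 1) / (n.factorial : ℝ) := by positivity
      calc γ (n + 1) / n.factorial * ‖δ‖ ^ (n + 1)
          ≤ γ (n + 1) / n.factorial * (K1 * ε) ^ (n + 1) :=
            mul_le_mul_of_nonneg_left h3 h4
        _ = A1 * ε ^ (n + 1) := by rw [hA1def, mul_pow]; ring
    have hT2 : ‖P δ - P vv‖ ≤ B * ‖δ - vv‖ := by
      rw [hPdef]
      simp only
      rw [← Finset.sum_sub_distrib]
      refine le_trans (norm_sum_le _ _) ?_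
      rw [hBdef, Finset.sum_mul]
      refine Finset.sum_le_sum (fun j hj => ?_)
      have hj' := Finset.mem_Icc.mp hj
      haveI : Nonempty (Fin j) := ⟨⟨0, by omega⟩⟩
      rw [← smul_sub, norm_smul, Real.norm_eq_abs, abs_of_nonneg (by positivity)]
      have hmax : max ‖δ‖ ‖vv‖ ≤ K1 + n * M := by
        refine max_le ?_ ?_
        · nlinarith
        · nlinarith
      have himg := ContinuousMultilinearMap.norm_image_sub_le (iteratedFDeriv ℝ j F x)
        (fun _ => δ) (fun _ => vv)
      have hsubconst : (fun _ : Fin j => δ) - (fun _ : Fin j => vv) = fun _ : Fin j => δ - vv :=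
        rfl
      rw [hsubconst, pi_norm_const, pi_norm_const, pi_norm_const, Fintype.card_fin] at himg
      rw [mul_assoc]
      refine mul_le_mul_of_nonneg_left ?_
        (by positivity : (0:ℝ) ≤ ((j.factorial : ℕ) : ℝ)⁻¹)
      refine himg.trans ?_
      have hγjb := hγ j (Finset.mem_Icc.mpr ⟨hj'.1, by omega⟩) x
      have hpow : max ‖δ‖ ‖vv‖ ^ (j - 1) ≤ (K1 + n * M) ^ (j - 1) :=
        pow_le_pow_left₀ (le_max_of_le_left (norm_nonneg _)) hmax _
      have hmaxnn : 0 ≤ max ‖δ‖ ‖vv‖ := le_max_of_le_left (norm_nonneg _)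
      have hnormnn : 0 ≤ ‖δ - vv‖ := norm_nonneg _
      have hiter : 0 ≤ ‖iteratedFDeriv ℝ j F x‖ := norm_nonneg _
      have h5 : 0 ≤ (j:ℝ) := Nat.cast_nonneg j
      have h6 : 0 ≤ max ‖δ‖ ‖vv‖ ^ (j-1) := pow_nonneg hmaxnn _
      have h8 : 0 ≤ γ j := hγj j hj
      calc ‖iteratedFDeriv ℝ j F x‖ * j * max ‖δ‖ ‖vv‖ ^ (j - 1) * ‖δ - vv‖
          ≤ γ j * j * max ‖δ‖ ‖vv‖ ^ (j - 1) * ‖δ - vv‖ :=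
            mul_le_mul_of_nonneg_right (mul_le_mul_of_nonneg_right
              (mul_le_mul_of_nonneg_right hγjb h5) h6) hnormnn
        _ ≤ γ j * j * (K1 + n * M) ^ (j - 1) * ‖δ - vv‖ := by
            refine mul_le_mul_of_nonneg_right ?_ hnormnn
            exact mul_le_mul_of_nonneg_left hpow (by positivity)
    have hT3 : ‖P vv - ∑ k ∈ Finset.Icc 1 n, ε ^ k •
        ((iteratedFDeriv ℝ 1 F x fun _ => uk k s) + Phi F k x (fun i => uk i s))‖
        ≤ A2 * ε ^ (n + 1) := by
      have hexp := expand_multilinear F hn x (fun k => uk k s) ε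
      have hPvv : P vv = (∑ k ∈ Finset.Icc 1 n, ε ^ k •
          ((iteratedFDeriv ℝ 1 F x fun _ => uk k s) + Phi F k x (fun i => uk i s)))
          + ∑ j ∈ Finset.Icc 1 n, (j.factorial : ℝ)⁻¹ •
            ∑ i ∈ (Fintype.piFinset fun _ : Fin j => Finset.Icc 1 n).filter
                (fun i => ¬ ∑ l, i l ≤ n),
              ε ^ (∑ l, i l) • iteratedFDeriv ℝ j F x (fun l => uk (i l) s) := by
        rw [hPdef, hvvdef]
        exact hexp
      rw [hPvv, add_sub_cancel_left]
      refine le_trans (norm_sum_le _ _) ?_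
      rw [hA2def, Finset.sum_mul]
      refine Finset.sum_le_sum (fun j hj => ?_)
      have hj' := Finset.mem_Icc.mp hj
      rw [norm_smul, Real.norm_eq_abs, abs_of_nonneg (by positivity), mul_assoc]
      refine mul_le_mul_of_nonneg_left ?_
        (by positivity : (0:ℝ) ≤ ((j.factorial : ℕ) : ℝ)⁻¹)
      have hterm : ∀ i ∈ (Fintype.piFinset fun _ : Fin j => Finset.Icc 1 n).filter
          (fun i => ¬ ∑ l, i l ≤ n),
          ‖ε ^ (∑ l, i l) • iteratedFDeriv ℝ j F x (fun l => uk (i l) s)‖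
            ≤ γ j * M ^ j * ε ^ (n + 1) := by
        intro i hi
        rw [Finset.mem_filter] at hi
        have hsum : n + 1 ≤ ∑ l, i l := by omega
        rw [norm_smul, Real.norm_eq_abs, abs_of_pos (by positivity)]
        have h1 : ε ^ (∑ l, i l) ≤ ε ^ (n + 1) :=
          pow_le_pow_of_le_one (le_of_lt hεpos) hε1 hsum
        have h2 : ‖iteratedFDeriv ℝ j F x (fun l => uk (i l) s)‖ ≤ γ j * M ^ j := by
          refine le_trans (ContinuousMultilinearMap.le_opNorm _ _) ?_
          have h3 : ∏ l : Fin j, ‖uk (i l) s‖ ≤ M ^ j := by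
            rw [show M ^ j = ∏ _l : Fin j, M by
              rw [Finset.prod_const, Finset.card_univ, Fintype.card_fin]]
            refine Finset.prod_le_prod (fun l _ => norm_nonneg _) (fun l _ => ?_)
            refine hukM (i l) ?_ s hs
            exact Fintype.mem_piFinset.mp hi.1 l
          have h4 := hγ j (Finset.mem_Icc.mpr ⟨hj'.1, by omega⟩) x
          have h5 : 0 ≤ γ j := hγj j hj
          nlinarith [norm_nonneg (iteratedFDeriv ℝ j F x),
            Finset.prod_nonneg (fun (l : Fin j) (_ : l ∈ Finset.univ) =>
              norm_nonneg (uk (i l) s))]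
        have h6 : 0 ≤ γ j * M ^ j := by
          have := hγj j hj
          positivity
        nlinarith [norm_nonneg (iteratedFDeriv ℝ j F x (fun l => uk (i l) s)),
          pow_nonneg (le_of_lt hεpos) (∑ l, i l)]
      refine le_trans (norm_sum_le _ _) ?_
      refine le_trans (Finset.sum_le_card_nsmul _ _ _ hterm) ?_
      rw [nsmul_eq_mul]
      have hcard : (((Fintype.piFinset fun _ : Fin j => Finset.Icc 1 n).filter
          (fun i => ¬ ∑ l, i l ≤ n)).card : ℝ) ≤ (n : ℝ) ^ j := by
        have h1 : ((Fintype.piFinset fun _ : Fin j => Finset.Icc 1 n).filter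
            (fun i => ¬ ∑ l, i l ≤ n)).card
            ≤ (Fintype.piFinset fun _ : Fin j => Finset.Icc 1 n).card :=
          Finset.card_filter_le _ _
        have h2 : (Fintype.piFinset fun _ : Fin j => Finset.Icc 1 n).card = n ^ j := by
          rw [Fintype.card_piFinset]
          simp [Nat.card_Icc]
        rw [h2] at h1
        exact_mod_cast h1
      have h7 : 0 ≤ γ j * M ^ j * ε ^ (n + 1) := by
        have := hγj j hj
        positivity
      nlinarith [hcard, h7, pow_nonneg (Nat.cast_nonneg (α := ℝ) n) j]
    -- combine
    have hEeq : E s = (F (x + δ) - (F x + P δ)) + (P δ - P vv)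
        + (P vv - ∑ k ∈ Finset.Icc 1 n, ε ^ k •
            ((iteratedFDeriv ℝ 1 F x fun _ => uk k s) + Phi F k x (fun i => uk i s))) := by
      rw [hEdef]
      simp only
      rw [hxδ, hWdef, hxdef]
      abel
    have hδvv : δ - vv = u ε s - φ s - ∑ k ∈ Finset.Icc 1 n, ε ^ k • uk k s := by
      rw [hδdef, hvvdef]
    calc ‖E s‖ ≤ ‖F (x + δ) - (F x + P δ)‖ + ‖P δ - P vv‖
          + ‖P vv - ∑ k ∈ Finset.Icc 1 n, ε ^ k •
            ((iteratedFDeriv ℝ 1 F x fun _ => uk k s) + Phi F k x (fun i => uk i s))‖ := by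
          rw [hEeq]
          exact norm_add₃_le
      _ ≤ A1 * ε ^ (n + 1) + B * ‖δ - vv‖ + A2 * ε ^ (n + 1) :=
          add_le_add (add_le_add htay hT2) hT3
      _ = (A1 + A2) * ε ^ (n + 1) + B * ‖δ - vv‖ := by ring
      _ = (A1 + A2) * ε ^ (n + 1)
          + B * ‖u ε s - φ s - ∑ k ∈ Finset.Icc 1 n, ε ^ k • uk k s‖ := by rw [hδvv]
  -- ## Grönwall for the remainder
  have hineq2 : ∀ t ∈ Set.Icc (0:ℝ) T,
      ‖u ε t - φ t - ∑ k ∈ Finset.Icc 1 n, ε ^ k • uk k t‖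
        ≤ (A1 + A2) * T * ε ^ (n + 1) + B * ∫ s in (0:ℝ)..t,
            ‖u ε s - φ s - ∑ k ∈ Finset.Icc 1 n, ε ^ k • uk k s‖ := by
    intro t ht
    rw [hrep t ht]
    have hgint : IntervalIntegrable (fun s => (A1 + A2) * ε ^ (n + 1)
        + B * ‖u ε s - φ s - ∑ k ∈ Finset.Icc 1 n, ε ^ k • uk k s‖) volume 0 t := by
      refine ContinuousOn.intervalIntegrable ?_
      rw [Set.uIcc_of_le ht.1]
      exact continuousOn_const.add (continuousOn_const.mul
        ((hgRc.mono (Set.Icc_subset_Icc_right ht.2))))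
    have hae : ∀ᵐ s ∂(volume.restrict (Set.uIoc 0 t)), ‖S (t - s) (E s)‖
        ≤ (A1 + A2) * ε ^ (n + 1)
          + B * ‖u ε s - φ s - ∑ k ∈ Finset.Icc 1 n, ε ^ k • uk k s‖ := by
      refine (ae_restrict_mem measurableSet_uIoc).mono (fun s hs => ?_)
      rw [Set.uIoc_of_le ht.1] at hs
      have hts : (0:ℝ) ≤ t - s := by linarith [hs.2]
      have hsT : s ∈ Set.Icc (0:ℝ) T := ⟨le_of_lt hs.1, le_trans hs.2 ht.2⟩
      calc ‖S (t - s) (E s)‖ ≤ ‖S (t - s)‖ * ‖E s‖ := ContinuousLinearMap.le_opNorm _ _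
        _ ≤ 1 * ‖E s‖ := mul_le_mul_of_nonneg_right (hS1 _ hts) (norm_nonneg _)
        _ = ‖E s‖ := one_mul _
        _ ≤ _ := hEbound s hsT
    refine le_trans (le_trans (intervalIntegral.norm_integral_le_of_norm_le ht.1 (by rw [Set.uIoc_of_le ht.1] at hae; exact (ae_restrict_iff' measurableSet_Ioc).mp hae) hgint) (le_abs_self _)) ?_
    have hginnn : ∀ s ∈ Set.Icc (0:ℝ) t, 0 ≤ (A1 + A2) * ε ^ (n + 1)
        + B * ‖u ε s - φ s - ∑ k ∈ Finset.Icc 1 n, ε ^ k • uk k s‖ := by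
      intro s _
      positivity
    rw [abs_of_nonneg (intervalIntegral.integral_nonneg ht.1 hginnn)]
    have hnint : IntervalIntegrable (fun s =>
        ‖u ε s - φ s - ∑ k ∈ Finset.Icc 1 n, ε ^ k • uk k s‖) volume 0 t := by
      refine ContinuousOn.intervalIntegrable ?_
      rw [Set.uIcc_of_le ht.1]
      exact hgRc.mono (Set.Icc_subset_Icc_right ht.2)
    rw [intervalIntegral.integral_add intervalIntegrable_const (hnint.const_mul B),
      intervalIntegral.integral_const, intervalIntegral.integral_const_mul]
    have h1 : (t - 0) • ((A1 + A2) * ε ^ (n + 1)) ≤ (A1 + A2) * T * ε ^ (n + 1) := by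
      rw [smul_eq_mul]
      have : 0 ≤ (A1 + A2) * ε ^ (n + 1) := by positivity
      nlinarith [ht.2]
    linarith
  intro t ht
  have hgron := gronwall_integral (a := (A1 + A2) * T * ε ^ (n + 1)) hB hgRc
    (fun s _ => norm_nonneg _) hineq2 t ht
  calc ‖u ε t - φ t - ∑ k ∈ Finset.Icc 1 n, ε ^ k • uk k t‖
      ≤ (A1 + A2) * T * ε ^ (n + 1) * Real.exp (B * t) := hgron
    _ ≤ (A1 + A2) * T * ε ^ (n + 1) * Real.exp (B * T) := by
        have h1 : Real.exp (B * t) ≤ Real.exp (B * T) :=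
          Real.exp_le_exp.mpr (mul_le_mul_of_nonneg_left ht.2 hB)
        have h2 : 0 ≤ (A1 + A2) * T * ε ^ (n + 1) := by positivity
        nlinarith
    _ ≤ ((A1 + A2) * T * Real.exp (B * T) + 1) * ε ^ (n + 1) := by nlinarith [hεpow]
end
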